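/- (Theorem 2.) Fix an integer n ≥ 1, σ > 0, α, τ ∈ (0,1) satisfying (C1) τ ≥ α and (C2) τ < 2Φ(−z_{α/2}/2) − α, and λ > 0 with √λ ≥ (z_{α/2} + z_{τ/2})σ/√n. Let c_1 > 0 be a solution of θ = √λ − z_{α/2}σ̃(θ)/√n, and set ν_0 = √λ and ν_3 = (z_{α/2} + z_{τ/2})σ/√n. Then the difference Δ(θ) = CR(θ) − CR_1(θ) satisfies: (a) Δ(θ) ≥ 1 − α/τ for every θ ∈ [0, min{ν_3, c_1}]; (b) Δ(θ) ≥ Φ(−z_{α/2}/2) − α/2 > 0 for every θ ∈ [min{ν_3, c_1}, ν_0]; and (c) Δ(θ) > −α/2 for every θ ∈ [ν_0, ∞). -/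

import Mathlib

open MeasureTheory ProbabilityTheory

/-- The standard normal cumulative distribution function. -/
noncomputable def Phi (x : ℝ) : ℝ := (gaussianReal 0 1 (Set.Iic x)).toReal

/-- P_s(θ,ν) = Φ(√n(θ − ν)/σ) + Φ(√n(−θ − ν)/σ). -/
noncomputable def Ps (n : ℕ) (σ θ ν : ℝ) : ℝ :=
  Phi (Real.sqrt n * (θ - ν) / σ) + Phi (Real.sqrt n * (-θ - ν) / σ)

/-- σ̃(θ) = (1 + λ/θ²)⁻¹ σ for θ ≠ 0, with the convention σ̃(0) = 0. -/
noncomputable def sigTilde (lam σ θ : ℝ) : ℝ :=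
  if θ = 0 then 0 else (1 + lam / θ ^ 2)⁻¹ * σ

open Classical in
/-- The piecewise function CR_a(θ,ν); here `za` denotes the quantile z_{α/2}. -/
noncomputable def CRa (n : ℕ) (σ lam za θ ν : ℝ) : ℝ :=
  if θ < |ν - za * sigTilde lam σ θ / Real.sqrt n| then
    (Ps n σ θ ν - 2 * Phi (-(za * sigTilde lam σ θ / σ))) *
      (if ν < za * sigTilde lam σ θ / Real.sqrt n then 1 else 0)
  else if θ ≤ ν + za * sigTilde lam σ θ / Real.sqrt n then
    Phi (za * sigTilde lam σ θ / σ) - Phi (Real.sqrt n * (ν - θ) / σ)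
  else 1 - 2 * Phi (-(za * sigTilde lam σ θ / σ))

open Classical in
/-- The piecewise function CR_b(θ,ν); here `za` denotes the quantile z_{α/2}. -/
noncomputable def CRb (n : ℕ) (σ α za θ ν : ℝ) : ℝ :=
  if θ < |ν - za * σ / Real.sqrt n| then
    (Ps n σ θ ν - α) * (if ν < za * σ / Real.sqrt n then 1 else 0)
  else if θ ≤ ν + za * σ / Real.sqrt n then
    1 - α / 2 - Phi (Real.sqrt n * (ν - θ) / σ)
  else 1 - α

/-- CR₁(θ) = CR_a(θ, ν₀)/P_s(θ, ν₀) with ν₀ = √λ: the conditional coverage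
probability of the asymptotic-based confidence interval. -/
noncomputable def CR1 (n : ℕ) (σ lam za θ : ℝ) : ℝ :=
  CRa n σ lam za θ (Real.sqrt lam) / Ps n σ θ (Real.sqrt lam)

/-- CR(θ) = (CR_b(θ,ν₁) + CR_a(θ,ν₂) − CR_b(θ,ν₂))/P_s(θ,ν₁) with
ν₁ = z_{τ/2}σ/√n and ν₂ = √λ + z_{α/2}σ/√n: the conditional coverage probability
of the two-step confidence interval. Here `za` = z_{α/2} and `zt` = z_{τ/2}. -/
noncomputable def CRtwo (n : ℕ) (σ lam α za zt θ : ℝ) : ℝ :=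
  (CRb n σ α za θ (zt * σ / Real.sqrt n)
    + CRa n σ lam za θ (Real.sqrt lam + za * σ / Real.sqrt n)
    - CRb n σ α za θ (Real.sqrt lam + za * σ / Real.sqrt n))
  / Ps n σ θ (zt * σ / Real.sqrt n)

/-- Δ(θ) = CR(θ) − CR₁(θ). -/
noncomputable def Delta (n : ℕ) (σ lam α za zt θ : ℝ) : ℝ :=
  CRtwo n σ lam α za zt θ - CR1 n σ lam za θ

lemma Phi_eq_integral (x : ℝ) :
    Phi x = ∫ t in Set.Iic x, gaussianPDFReal 0 1 t := by
  rw [Phi, gaussianReal_apply_eq_integral 0 one_ne_zero,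
    ENNReal.toReal_ofReal (integral_nonneg fun t => gaussianPDFReal_nonneg 0 1 t)]

lemma Phi_sub_eq (a b : ℝ) : Phi b - Phi a = ∫ t in a..b, gaussianPDFReal 0 1 t := by
  rw [Phi_eq_integral, Phi_eq_integral]
  exact intervalIntegral.integral_Iic_sub_Iic ((integrable_gaussianPDFReal 0 1).integrableOn)
    ((integrable_gaussianPDFReal 0 1).integrableOn)

lemma Phi_mono : Monotone Phi := by
  intro a b h
  have h2 := Phi_sub_eq a b
  have h3 : 0 ≤ ∫ t in a..b, gaussianPDFReal 0 1 t :=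
    intervalIntegral.integral_nonneg h (fun x _ => gaussianPDFReal_nonneg 0 1 x)
  linarith

lemma Phi_strictMono : StrictMono Phi := by
  intro a b h
  have h2 := Phi_sub_eq a b
  have h3 : 0 < ∫ t in a..b, gaussianPDFReal 0 1 t :=
    intervalIntegral.intervalIntegral_pos_of_pos ((integrable_gaussianPDFReal 0 1).intervalIntegrable)
      (fun x => gaussianPDFReal_pos 0 1 x one_ne_zero) h
  linarith

lemma Phi_nonneg (x : ℝ) : 0 ≤ Phi x := ENNReal.toReal_nonneg

lemma Phi_le_one (x : ℝ) : Phi x ≤ 1 := by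
  have h := prob_le_one (μ := gaussianReal 0 1) (s := Set.Iic x)
  have := ENNReal.toReal_mono (by norm_num) h
  simpa [Phi] using this

lemma Phi_pos (x : ℝ) : 0 < Phi x :=
  lt_of_le_of_lt (Phi_nonneg (x - 1)) (Phi_strictMono (by linarith))

lemma Phi_lt_one (x : ℝ) : Phi x < 1 :=
  lt_of_lt_of_le (Phi_strictMono (show x < x + 1 by linarith)) (Phi_le_one (x + 1))

lemma Phi_neg (x : ℝ) : Phi (-x) = 1 - Phi x := by
  have hmap : (gaussianReal 0 1).map (fun y => -y) = gaussianReal 0 1 := by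
    have h := gaussianReal_map_const_mul (μ := 0) (v := 1) (-1)
    have e1 : (fun y : ℝ => -y) = (fun y : ℝ => -1 * y) := by funext y; ring
    have e2 : ((-1 : ℝ)) * 0 = 0 := by ring
    have e3 : (⟨(-1 : ℝ)^2, sq_nonneg _⟩ : NNReal) * 1 = 1 := by
      ext; norm_num
    rw [e1, h, e2]; congr 1
  have hpre : (fun y : ℝ => -y) ⁻¹' (Set.Iic (-x)) = Set.Ici x := by
    ext y; simp
  have h1 : gaussianReal 0 1 (Set.Iic (-x)) = gaussianReal 0 1 (Set.Ici x) := by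
    conv_lhs => rw [← hmap]
    rw [Measure.map_apply measurable_neg measurableSet_Iic, hpre]
  have hsing : gaussianReal 0 1 {x} = 0 :=
    gaussianReal_absolutelyContinuous 0 one_ne_zero (by simp)
  have hIio : gaussianReal 0 1 (Set.Iio x) = gaussianReal 0 1 (Set.Iic x) := by
    apply le_antisymm (measure_mono Set.Iio_subset_Iic_self)
    calc gaussianReal 0 1 (Set.Iic x) = gaussianReal 0 1 (Set.Iio x ∪ {x}) := by
          rw [← Set.Iio_insert, Set.insert_eq, Set.union_comm]
      _ ≤ gaussianReal 0 1 (Set.Iio x) + gaussianReal 0 1 {x} := measure_union_le _ _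
      _ = gaussianReal 0 1 (Set.Iio x) := by rw [hsing, add_zero]
  have h2 : gaussianReal 0 1 (Set.Ici x) = 1 - gaussianReal 0 1 (Set.Iio x) := by
    rw [← prob_compl_eq_one_sub measurableSet_Iio, Set.compl_Iio]
  have hle : gaussianReal 0 1 (Set.Iio x) ≤ 1 := prob_le_one
  rw [Phi, Phi, h1, h2, hIio, ENNReal.toReal_sub_of_le (hIio ▸ hle) (by norm_num)]
  norm_num

lemma Phi_zero : Phi 0 = 1/2 := by
  have h := Phi_neg 0
  rw [neg_zero] at h
  linarith

lemma gaussianPDFReal_anti {x y : ℝ} (h : x^2 ≤ y^2) :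
    gaussianPDFReal 0 1 y ≤ gaussianPDFReal 0 1 x := by
  simp only [gaussianPDFReal, sub_zero]
  have h1 : (0:ℝ) ≤ (Real.sqrt (2 * Real.pi * 1))⁻¹ := by positivity
  apply mul_le_mul_of_nonneg_left _ h1
  apply Real.exp_le_exp.2
  have : (0:ℝ) < 2 * 1 := by norm_num
  have h2 : -(y^2)/(2*(1:ℝ)) ≤ -(x^2)/(2*(1:ℝ)) := by linarith
  simpa using h2

lemma Phi_shift {l r d : ℝ} (hd : 0 ≤ d) (hl : -(d/2) ≤ l) (hlr : l ≤ r) :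
    Phi (r + d) - Phi (l + d) ≤ Phi r - Phi l := by
  rw [Phi_sub_eq, Phi_sub_eq]
  rw [← intervalIntegral.integral_comp_add_right (fun t => gaussianPDFReal 0 1 t) d]
  apply intervalIntegral.integral_mono_on hlr
    ((integrable_gaussianPDFReal 0 1).comp_add_right d).intervalIntegrable
    ((integrable_gaussianPDFReal 0 1).intervalIntegrable)
  intro x hx
  apply gaussianPDFReal_anti
  nlinarith [hx.1]

lemma Phi_two_sided {h c : ℝ} (hh : 0 ≤ h) (hc : 0 ≤ c) :
    2 * Phi (-c) ≤ Phi (h - c) + Phi (-h - c) := by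
  have key := Phi_shift (l := -c) (r := h - c) (d := 2*c) (by linarith) (by linarith) (by linarith)
  have e1 : h - c + 2*c = h + c := by ring
  have e2 : -c + 2*c = c := by ring
  rw [e1, e2] at key
  have h1 : Phi (-h - c) = 1 - Phi (h + c) := by
    rw [show -h - c = -(h + c) by ring, Phi_neg]
  have h2 : Phi (-c) = 1 - Phi c := Phi_neg c
  linarith

lemma Phi_combo {a b : ℝ} (hb : 0 ≤ b) (hba : b ≤ a) :
    2 * Phi (-b) - Phi (-a) ≤ Phi (a - 2*b) := by
  have key := Phi_shift (l := -b) (r := a - 2*b) (d := 2*b) (by linarith) (by linarith) (by linarith)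
  have e1 : a - 2*b + 2*b = a := by ring
  have e2 : -b + 2*b = b := by ring
  rw [e1, e2] at key
  have h1 := Phi_neg (-a)
  have h2 := Phi_neg (-b)
  rw [neg_neg] at h1 h2
  linarith

noncomputable def Gf (za lam s v : ℝ) : ℝ := za * ((v*s)^2 / ((v*s)^2 + lam))

lemma Gf_den_pos (lam s v : ℝ) (hlam : 0 < lam) : 0 < (v*s)^2 + lam := by positivity

lemma Gf_nonneg (za lam s v : ℝ) (hza : 0 ≤ za) (hlam : 0 < lam) : 0 ≤ Gf za lam s v := by
  have := Gf_den_pos lam s v hlam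
  apply mul_nonneg hza (div_nonneg (sq_nonneg _) this.le)

lemma Gf_lt (za lam s v : ℝ) (hza : 0 < za) (hlam : 0 < lam) : Gf za lam s v < za := by
  have hden := Gf_den_pos lam s v hlam
  have h1 : (v*s)^2 / ((v*s)^2 + lam) < 1 := (div_lt_one hden).2 (by linarith)
  calc Gf za lam s v = za * ((v*s)^2 / ((v*s)^2 + lam)) := rfl
    _ < za * 1 := mul_lt_mul_of_pos_left h1 hza
    _ = za := by ring

lemma Gf_mono (za lam s v w : ℝ) (hza : 0 ≤ za) (hlam : 0 < lam) (hs : 0 < s)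
    (hv : 0 ≤ v) (hvw : v ≤ w) : Gf za lam s v ≤ Gf za lam s w := by
  have h1 : (v*s)^2 ≤ (w*s)^2 :=
    pow_le_pow_left₀ (mul_nonneg hv hs.le) (mul_le_mul_of_nonneg_right hvw hs.le) 2
  have h2 : (v*s)^2 / ((v*s)^2 + lam) ≤ (w*s)^2 / ((w*s)^2 + lam) := by
    rw [div_le_div_iff₀ (Gf_den_pos lam s v hlam) (Gf_den_pos lam s w hlam)]
    nlinarith [hlam]
  exact mul_le_mul_of_nonneg_left h2 hza

lemma Gf_half_le (za lam s v : ℝ) (hza : 0 ≤ za) (hlam : 0 < lam) (hs : 0 < s)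
    (hv : 0 ≤ v) (hvl : v * s ≤ Real.sqrt lam) : Gf za lam s v ≤ za/2 := by
  have h1 : (v*s)^2 ≤ lam := by
    have h2 : (v*s)^2 ≤ (Real.sqrt lam)^2 := pow_le_pow_left₀ (mul_nonneg hv hs.le) hvl 2
    rwa [Real.sq_sqrt hlam.le] at h2
  have h3 : (v*s)^2 / ((v*s)^2 + lam) ≤ 1/2 := by
    rw [div_le_iff₀ (Gf_den_pos lam s v hlam)]; linarith
  calc Gf za lam s v = za * ((v*s)^2 / ((v*s)^2 + lam)) := rfl
    _ ≤ za * (1/2) := mul_le_mul_of_nonneg_left h3 hza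
    _ = za/2 := by ring

lemma Gf_half_ge (za lam s v : ℝ) (hza : 0 ≤ za) (hlam : 0 < lam)
    (hvl : Real.sqrt lam ≤ v * s) : za/2 ≤ Gf za lam s v := by
  have hrl : 0 ≤ Real.sqrt lam := Real.sqrt_nonneg lam
  have h1 : lam ≤ (v*s)^2 := by
    have h2 : (Real.sqrt lam)^2 ≤ (v*s)^2 := pow_le_pow_left₀ hrl hvl 2
    rwa [Real.sq_sqrt hlam.le] at h2
  have h3 : (1:ℝ)/2 ≤ (v*s)^2 / ((v*s)^2 + lam) := by
    rw [le_div_iff₀ (Gf_den_pos lam s v hlam)]; linarith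
  calc za/2 = za * (1/2) := by ring
    _ ≤ za * ((v*s)^2 / ((v*s)^2 + lam)) := mul_le_mul_of_nonneg_left h3 hza
    _ = Gf za lam s v := rfl

lemma sigTilde_mul (lam σ θ : ℝ) (hlam : 0 < lam) :
    sigTilde lam σ θ = (θ^2/(θ^2+lam)) * σ := by
  rcases eq_or_ne θ 0 with h | h
  · subst h
    simp [sigTilde]
  · rw [sigTilde, if_neg h]
    have h2 : θ^2 ≠ 0 := pow_ne_zero _ h
    have h3 : θ^2 + lam ≠ 0 := by positivity
    field_simp

set_option maxHeartbeats 4000000 in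
/-- Theorem 2: under (C1), (C2) and √λ ≥ (z_{α/2} + z_{τ/2})σ/√n,
setting ν₀ = √λ and ν₃ = (z_{α/2} + z_{τ/2})σ/√n:
(a) Δ(θ) ≥ 1 − α/τ on [0, min{ν₃, c₁}];
(b) Δ(θ) ≥ Φ(−z_{α/2}/2) − α/2 > 0 on [min{ν₃, c₁}, ν₀];
(c) Δ(θ) > −α/2 on [ν₀, ∞). -/
theorem theorem2 (n : ℕ) (hn : 1 ≤ n) (σ lam α τ za zt : ℝ)
    (hσ : 0 < σ) (hlam : 0 < lam)
    (hα : α ∈ Set.Ioo (0:ℝ) 1) (hτ : τ ∈ Set.Ioo (0:ℝ) 1)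
    (hza : Phi (-za) = α / 2) (hzt : Phi (-zt) = τ / 2)
    (hC1 : α ≤ τ) (hC2 : τ < 2 * Phi (-(za / 2)) - α)
    (hlamLB : (za + zt) * σ / Real.sqrt n ≤ Real.sqrt lam)
    (c₁ : ℝ) (hc₁pos : 0 < c₁)
    (hc₁ : c₁ = Real.sqrt lam - za * sigTilde lam σ c₁ / Real.sqrt n) :
    (∀ θ ∈ Set.Icc (0:ℝ) (min ((za + zt) * σ / Real.sqrt n) c₁),
      1 - α / τ ≤ Delta n σ lam α za zt θ) ∧
    (∀ θ ∈ Set.Icc (min ((za + zt) * σ / Real.sqrt n) c₁) (Real.sqrt lam),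
      Phi (-(za / 2)) - α / 2 ≤ Delta n σ lam α za zt θ) ∧
    0 < Phi (-(za / 2)) - α / 2 ∧
    (∀ θ ∈ Set.Ici (Real.sqrt lam), -(α / 2) < Delta n σ lam α za zt θ) := by
  obtain ⟨hα0, hα1⟩ := hα
  obtain ⟨hτ0, hτ1⟩ := hτ
  have hn0 : (0:ℝ) < n := by exact_mod_cast Nat.lt_of_lt_of_le Nat.zero_lt_one hn
  have hsq : 0 < Real.sqrt n := Real.sqrt_pos.2 hn0
  obtain ⟨s, hs, hss⟩ : ∃ s, 0 < s ∧ Real.sqrt n * s = σ :=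
    ⟨σ / Real.sqrt n, div_pos hσ hsq, by field_simp⟩
  have hrl : 0 < Real.sqrt lam := Real.sqrt_pos.2 hlam
  obtain ⟨rL, hrLs⟩ : ∃ r, Real.sqrt lam = r * s := ⟨Real.sqrt lam / s, by field_simp⟩
  have hrL0 : 0 < rL := by nlinarith [hrl, hs]
  have hPhi0 : Phi 0 = 1/2 := Phi_zero
  -- basic facts about the quantiles
  have hza0 : 0 < za := by
    by_contra hle
    push_neg at hle
    have h1 : Phi 0 ≤ Phi (-za) := Phi_mono (by linarith)
    rw [hza, hPhi0] at h1; linarith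
  have hzt0 : 0 < zt := by
    by_contra hle
    push_neg at hle
    have h1 : Phi 0 ≤ Phi (-zt) := Phi_mono (by linarith)
    rw [hzt, hPhi0] at h1; linarith
  have hba : zt ≤ za := by
    by_contra hlt
    push_neg at hlt
    have h1 : Phi (-zt) < Phi (-za) := Phi_strictMono (by linarith)
    rw [hza, hzt] at h1; linarith
  have hH : Phi (-za) + Phi (-zt) < Phi (-(za/2)) := by rw [hza, hzt]; linarith
  have hb2 : za/2 < zt := by
    by_contra h'
    push_neg at h'
    have h1 : Phi (-(za/2)) ≤ Phi (-zt) := Phi_mono (by linarith)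
    have h2 := Phi_pos (-za)
    linarith
  have hzaPhi : Phi za = 1 - α/2 := by
    have h1 := Phi_neg za; rw [hza] at h1; linarith
  have hHha : α/2 ≤ Phi (-(za/2)) := by
    have h1 : Phi (-za) ≤ Phi (-(za/2)) := Phi_mono (by linarith)
    rw [hza] at h1; exact h1
  have hHle : Phi (-(za/2)) ≤ 1/2 := by
    have h1 : Phi (-(za/2)) ≤ Phi 0 := Phi_mono (by linarith)
    rw [hPhi0] at h1; exact h1
  -- scaled quantities
  have hdiv : ∀ x : ℝ, x * σ / Real.sqrt n = x * s := by
    intro x; rw [← hss]; field_simp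
  have hab_rL : za + zt ≤ rL := by
    rw [hdiv (za + zt), hrLs] at hlamLB
    exact le_of_mul_le_mul_right hlamLB hs
  have hzarL : za < rL := by linarith
  -- the scaled half-width function G
  obtain ⟨G, hGdef⟩ : ∃ G : ℝ → ℝ, G = Gf za lam s := ⟨_, rfl⟩
  have hG_nonneg : ∀ v : ℝ, 0 ≤ G v := by
    intro v; rw [hGdef]; exact Gf_nonneg za lam s v hza0.le hlam
  have hG_lt : ∀ v : ℝ, G v < za := by
    intro v; rw [hGdef]; exact Gf_lt za lam s v hza0 hlam
  have hG_mono : ∀ v w : ℝ, 0 ≤ v → v ≤ w → G v ≤ G w := by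
    intro v w hv hvw; rw [hGdef]; exact Gf_mono za lam s v w hza0.le hlam hs hv hvw
  have hG_half_le : ∀ v : ℝ, 0 ≤ v → v * s ≤ Real.sqrt lam → G v ≤ za/2 := by
    intro v hv hvl; rw [hGdef]; exact Gf_half_le za lam s v hza0.le hlam hs hv hvl
  have hG_half_ge : ∀ v : ℝ, Real.sqrt lam ≤ v * s → za/2 ≤ G v := by
    intro v hvl; rw [hGdef]; exact Gf_half_ge za lam s v hza0.le hlam hvl
  -- rewriting lemmas
  have hden : ∀ v : ℝ, ((v*s)^2 + lam) ≠ 0 := fun v => (Gf_den_pos lam s v hlam).ne'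
  have hgv : ∀ v : ℝ, za * sigTilde lam σ (v*s) / Real.sqrt n = G v * s := by
    intro v
    rw [hGdef, sigTilde_mul lam σ (v*s) hlam]
    simp only [Gf]
    rw [← hss]
    field_simp
  have hgσ : ∀ v : ℝ, za * sigTilde lam σ (v*s) / σ = G v := by
    intro v
    rw [hGdef, sigTilde_mul lam σ (v*s) hlam]
    simp only [Gf]
    field_simp
  have hArg : ∀ v m : ℝ, Real.sqrt n * (m*s - v*s) / σ = m - v := by
    intro v m; rw [← hss]; field_simp
  have hν₁eq : zt * σ / Real.sqrt n = zt * s := hdiv zt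
  have hν₂eq : Real.sqrt lam + za * σ / Real.sqrt n = (rL + za) * s := by
    rw [hdiv za, hrLs]; ring
  have hzaseq : za * σ / Real.sqrt n = za * s := hdiv za
  have hPsv : ∀ v m : ℝ, Ps n σ (v*s) (m*s) = Phi (v - m) + Phi (-v - m) := by
    intro v m
    rw [Ps]
    congr 1
    · rw [show v*s - m*s = ((v - m)*s : ℝ) by ring, ← hss]
      congr 1
      field_simp
    · rw [show -(v*s) - m*s = ((-v - m)*s : ℝ) by ring, ← hss]
      congr 1
      field_simp
  -- Ps basics
  have hPs_pos : ∀ v m : ℝ, 0 < Ps n σ (v*s) (m*s) := by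
    intro v m; rw [hPsv]
    have := Phi_pos (v - m); have := Phi_nonneg (-v - m); linarith
  have hPs_le_one : ∀ v m : ℝ, 0 ≤ m → Ps n σ (v*s) (m*s) ≤ 1 := by
    intro v m hm; rw [hPsv]
    have h1 : Phi (-v - m) ≤ Phi (-(v - m)) := Phi_mono (by linarith)
    have h2 := Phi_neg (v - m)
    linarith
  have hPs_lt_one : ∀ v m : ℝ, 0 < m → Ps n σ (v*s) (m*s) < 1 := by
    intro v m hm; rw [hPsv]
    have h1 : Phi (-v - m) < Phi (-(v - m)) := Phi_strictMono (by linarith)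
    have h2 := Phi_neg (v - m)
    linarith
  have hPs_ge : ∀ v m : ℝ, 0 ≤ v → 0 ≤ m → 2 * Phi (-m) ≤ Ps n σ (v*s) (m*s) := by
    intro v m hv hm; rw [hPsv]
    exact Phi_two_sided hv hm
  -- evaluation of CRa
  have hCRa_zero : ∀ v m : ℝ, 0 ≤ v → v + G v ≤ m → CRa n σ lam za (v*s) (m*s) = 0 := by
    intro v m hv0 hvm
    have hG0 := hG_nonneg v
    have habs : |m*s - za * sigTilde lam σ (v*s) / Real.sqrt n| = (m - G v)*s := by
      rw [hgv v, show m*s - G v*s = ((m - G v)*s : ℝ) by ring, abs_mul,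
        abs_of_nonneg (show (0:ℝ) ≤ m - G v by linarith), abs_of_pos hs]
    rcases lt_or_eq_of_le (show v ≤ m - G v by linarith) with hlt | heq
    · have h1 : v*s < |m*s - za * sigTilde lam σ (v*s) / Real.sqrt n| := by
        rw [habs]; exact (mul_lt_mul_iff_left₀ hs).2 hlt
      have h2 : ¬(m*s < za * sigTilde lam σ (v*s) / Real.sqrt n) := by
        rw [hgv v]
        exact not_lt.2 (mul_le_mul_of_nonneg_right (by linarith) hs.le)
      simp only [CRa]
      rw [if_pos h1, if_neg h2, mul_zero]
    · have h1 : ¬(v*s < |m*s - za * sigTilde lam σ (v*s) / Real.sqrt n|) := by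
        rw [habs]
        exact not_lt.2 (le_of_eq (by rw [← heq]))
      have h2 : v*s ≤ m*s + za * sigTilde lam σ (v*s) / Real.sqrt n := by
        rw [hgv v]
        calc v*s ≤ (m + G v)*s := mul_le_mul_of_nonneg_right (by linarith) hs.le
          _ = m*s + G v*s := by ring
      simp only [CRa]
      rw [if_neg h1, if_pos h2, hgσ v, hArg v m, show m - v = G v by linarith, sub_self]
  have hCRa_mid : ∀ v m : ℝ, m - G v ≤ v → v ≤ m + G v → 0 ≤ m - G v →
      CRa n σ lam za (v*s) (m*s) = Phi (G v) - Phi (m - v) := by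
    intro v m hmv hvm hm0
    have habs : |m*s - za * sigTilde lam σ (v*s) / Real.sqrt n| = (m - G v)*s := by
      rw [hgv v, show m*s - G v*s = ((m - G v)*s : ℝ) by ring, abs_mul,
        abs_of_nonneg hm0, abs_of_pos hs]
    have h1 : ¬(v*s < |m*s - za * sigTilde lam σ (v*s) / Real.sqrt n|) := by
      rw [habs]
      exact not_lt.2 (mul_le_mul_of_nonneg_right hmv hs.le)
    have h2 : v*s ≤ m*s + za * sigTilde lam σ (v*s) / Real.sqrt n := by
      rw [hgv v]
      calc v*s ≤ (m + G v)*s := mul_le_mul_of_nonneg_right hvm hs.le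
        _ = m*s + G v*s := by ring
    simp only [CRa]
    rw [if_neg h1, if_pos h2, hgσ v, hArg v m]
  have hCRa_last : ∀ v m : ℝ, m + G v ≤ v → 0 ≤ m - G v →
      CRa n σ lam za (v*s) (m*s) = Phi (G v) - Phi (-(G v)) := by
    intro v m hmv hm0
    have hG0 := hG_nonneg v
    rcases lt_or_eq_of_le hmv with hlt | heq
    · have habs : |m*s - za * sigTilde lam σ (v*s) / Real.sqrt n| = (m - G v)*s := by
        rw [hgv v, show m*s - G v*s = ((m - G v)*s : ℝ) by ring, abs_mul,
          abs_of_nonneg hm0, abs_of_pos hs]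
      have h1 : ¬(v*s < |m*s - za * sigTilde lam σ (v*s) / Real.sqrt n|) := by
        rw [habs]
        exact not_lt.2 (mul_le_mul_of_nonneg_right (by linarith) hs.le)
      have h2 : ¬(v*s ≤ m*s + za * sigTilde lam σ (v*s) / Real.sqrt n) := by
        rw [hgv v]
        apply not_le.2
        calc m*s + G v*s = (m + G v)*s := by ring
          _ < v*s := (mul_lt_mul_iff_left₀ hs).2 hlt
      simp only [CRa]
      rw [if_neg h1, if_neg h2, hgσ v]
      have h3 := Phi_neg (G v)
      linarith
    · rw [hCRa_mid v m (by linarith) (by linarith [heq]) hm0,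
        show m - v = -(G v) by linarith]
  -- evaluation of CRb at ν₁ = zt * s
  have habs1 : |zt*s - za * σ / Real.sqrt n| = (za - zt)*s := by
    rw [hzaseq, show zt*s - za*s = (-((za - zt)*s) : ℝ) by ring, abs_neg, abs_mul,
      abs_of_nonneg (show (0:ℝ) ≤ za - zt by linarith), abs_of_pos hs]
  have hCRb_first : ∀ v : ℝ, 0 ≤ v → v < za - zt →
      CRb n σ α za (v*s) (zt*s) = Ps n σ (v*s) (zt*s) - α := by
    intro v hv0 hv
    have h1 : v*s < |zt*s - za * σ / Real.sqrt n| := by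
      rw [habs1]; exact (mul_lt_mul_iff_left₀ hs).2 hv
    have h2 : zt*s < za * σ / Real.sqrt n := by
      rw [hzaseq]; exact (mul_lt_mul_iff_left₀ hs).2 (by linarith)
    simp only [CRb]
    rw [if_pos h1, if_pos h2, mul_one]
  have hCRb_mid : ∀ v : ℝ, za - zt ≤ v → v ≤ za + zt →
      CRb n σ α za (v*s) (zt*s) = Phi (v - zt) - α/2 := by
    intro v h1v h2v
    have h1 : ¬(v*s < |zt*s - za * σ / Real.sqrt n|) := by
      rw [habs1]
      exact not_lt.2 (mul_le_mul_of_nonneg_right h1v hs.le)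
    have h2 : v*s ≤ zt*s + za * σ / Real.sqrt n := by
      rw [hzaseq]
      calc v*s ≤ (zt + za)*s := mul_le_mul_of_nonneg_right (by linarith) hs.le
        _ = zt*s + za*s := by ring
    simp only [CRb]
    rw [if_neg h1, if_pos h2, hArg v zt, show zt - v = -(v - zt) by ring, Phi_neg]
    ring
  have hCRb_last : ∀ v : ℝ, za + zt ≤ v → CRb n σ α za (v*s) (zt*s) = 1 - α := by
    intro v hv
    rcases lt_or_eq_of_le hv with hlt | heq
    · have h1 : ¬(v*s < |zt*s - za * σ / Real.sqrt n|) := by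
        rw [habs1]
        exact not_lt.2 (mul_le_mul_of_nonneg_right (by linarith) hs.le)
      have h2 : ¬(v*s ≤ zt*s + za * σ / Real.sqrt n) := by
        rw [hzaseq]
        apply not_le.2
        calc zt*s + za*s = (za + zt)*s := by ring
          _ < v*s := (mul_lt_mul_iff_left₀ hs).2 hlt
      simp only [CRb]
      rw [if_neg h1, if_neg h2]
    · rw [hCRb_mid v (by linarith) heq.ge, show v - zt = za by linarith, hzaPhi]
      ring
  -- evaluation of CRb at ν₂ = (rL + za) * s
  have habs2 : |(rL + za)*s - za * σ / Real.sqrt n| = rL*s := by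
    rw [hzaseq, show (rL + za)*s - za*s = (rL*s : ℝ) by ring, abs_of_nonneg (by positivity)]
  have hCRb2_mid : ∀ v : ℝ, rL ≤ v → v ≤ rL + 2*za →
      CRb n σ α za (v*s) ((rL + za)*s) = 1 - α/2 - Phi (rL + za - v) := by
    intro v h1v h2v
    have h1 : ¬(v*s < |(rL + za)*s - za * σ / Real.sqrt n|) := by
      rw [habs2]
      exact not_lt.2 (mul_le_mul_of_nonneg_right h1v hs.le)
    have h2 : v*s ≤ (rL + za)*s + za * σ / Real.sqrt n := by
      rw [hzaseq]
      calc v*s ≤ (rL + 2*za)*s := mul_le_mul_of_nonneg_right h2v hs.le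
        _ = (rL + za)*s + za*s := by ring
    simp only [CRb]
    rw [if_neg h1, if_pos h2, hArg v (rL + za)]
  have hCRb2_last : ∀ v : ℝ, rL + 2*za ≤ v → CRb n σ α za (v*s) ((rL + za)*s) = 1 - α := by
    intro v hv
    rcases lt_or_eq_of_le hv with hlt | heq
    · have h1 : ¬(v*s < |(rL + za)*s - za * σ / Real.sqrt n|) := by
        rw [habs2]
        exact not_lt.2 (mul_le_mul_of_nonneg_right (by linarith) hs.le)
      have h2 : ¬(v*s ≤ (rL + za)*s + za * σ / Real.sqrt n) := by
        rw [hzaseq]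
        apply not_le.2
        calc (rL + za)*s + za*s = (rL + 2*za)*s := by ring
          _ < v*s := (mul_lt_mul_iff_left₀ hs).2 hlt
      simp only [CRb]
      rw [if_neg h1, if_neg h2]
    · rw [hCRb2_mid v (by linarith) heq.ge, show rL + za - v = -za by linarith, hza]
      ring
  have hCRb2_zero : ∀ v : ℝ, 0 ≤ v → v ≤ rL → CRb n σ α za (v*s) ((rL + za)*s) = 0 := by
    intro v hv0 hv
    rcases lt_or_eq_of_le hv with hlt | heq
    · have h1 : v*s < |(rL + za)*s - za * σ / Real.sqrt n| := by
        rw [habs2]; exact (mul_lt_mul_iff_left₀ hs).2 hlt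
      have h2 : ¬((rL + za)*s < za * σ / Real.sqrt n) := by
        rw [hzaseq]
        exact not_lt.2 (mul_le_mul_of_nonneg_right (by linarith) hs.le)
      simp only [CRb]
      rw [if_pos h1, if_neg h2, mul_zero]
    · rw [hCRb2_mid v heq.ge (by linarith), show rL + za - v = za by linarith, hzaPhi]
      ring
  -- the Delta decomposition
  have hDelta : ∀ v : ℝ, Delta n σ lam α za zt (v*s) =
      (CRb n σ α za (v*s) (zt*s) + CRa n σ lam za (v*s) ((rL + za)*s)
        - CRb n σ α za (v*s) ((rL + za)*s)) / Ps n σ (v*s) (zt*s)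
      - CRa n σ lam za (v*s) (rL*s) / Ps n σ (v*s) (rL*s) := by
    intro v
    simp only [Delta, CRtwo, CR1]
    rw [hν₂eq, hν₁eq, hrLs]
  -- facts about c₁ in scaled form
  obtain ⟨wc, hwc⟩ : ∃ w, c₁ = w * s := ⟨c₁ / s, by field_simp⟩
  have hwc0 : 0 ≤ wc := by nlinarith [hc₁pos, hs]
  have hwcG : wc + G wc = rL := by
    rw [hwc, hrLs, hgv wc] at hc₁
    have h1 : (wc + G wc) * s = rL * s := by linarith [hc₁]
    exact mul_right_cancel₀ hs.ne' h1
  refine ⟨?_, ?_, by linarith, ?_⟩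
  · -- part (a)
    rintro θ ⟨hθ0, hθm⟩
    obtain ⟨v, hv⟩ : ∃ v, θ = v * s := ⟨θ / s, (div_mul_cancel₀ θ hs.ne').symm⟩
    have hv0 : 0 ≤ v := by
      have h0 : (0:ℝ)*s ≤ v*s := by rw [zero_mul, ← hv]; exact hθ0
      exact le_of_mul_le_mul_right h0 hs
    have hθ3 : θ ≤ (za + zt) * s := by
      rw [← hdiv (za + zt)]; exact le_trans hθm (min_le_left _ _)
    have hv3 : v ≤ za + zt := by
      rw [hv] at hθ3; exact le_of_mul_le_mul_right hθ3 hs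
    have hθc : θ ≤ c₁ := le_trans hθm (min_le_right _ _)
    have hvwc : v ≤ wc := by
      rw [hv, hwc] at hθc; exact le_of_mul_le_mul_right hθc hs
    have hvG : v + G v ≤ rL := by
      have := hG_mono v wc hv0 hvwc; linarith [hwcG]
    have hCRa0 : CRa n σ lam za (v*s) (rL*s) = 0 := hCRa_zero v rL hv0 hvG
    have hCRa2 : CRa n σ lam za (v*s) ((rL+za)*s) = 0 :=
      hCRa_zero v (rL + za) hv0 (by linarith)
    have hCRb2 : CRb n σ α za (v*s) ((rL+za)*s) = 0 :=
      hCRb2_zero v hv0 (by linarith [hG_nonneg v])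
    have hPs1pos := hPs_pos v zt
    rw [hv, hDelta v, hCRa0, hCRa2, hCRb2, zero_div, sub_zero, add_zero, sub_zero]
    rcases lt_or_ge v (za - zt) with hcase | hcase
    · rw [hCRb_first v hv0 hcase]
      have hPsge : τ ≤ Ps n σ (v*s) (zt*s) := by
        have h1 := hPs_ge v zt hv0 hzt0.le
        rw [hzt] at h1; linarith
      rw [le_div_iff₀ hPs1pos]
      have e1 : (1 - α/τ) = (τ - α)/τ := by field_simp
      rw [e1, div_mul_eq_mul_div, div_le_iff₀ hτ0]
      have hprod := mul_le_mul_of_nonneg_left hPsge hα0.le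
      linarith only [hprod]
    · rw [hCRb_mid v hcase hv3]
      have hp : τ - α/2 ≤ Phi (v - zt) := by
        have h1 := Phi_combo hzt0.le hba
        rw [hza, hzt] at h1
        have h2 : Phi (za - 2*zt) ≤ Phi (v - zt) := Phi_mono (by linarith)
        linarith
      have hq : Phi (-v - zt) ≤ α/2 := by
        have h1 : Phi (-v - zt) ≤ Phi (-za) := Phi_mono (by linarith)
        rw [hza] at h1; exact h1
      have hq0 := Phi_nonneg (-v - zt)
      rw [hPsv v zt] at hPs1pos ⊢
      rw [le_div_iff₀ hPs1pos]
      have e1 : (1 - α/τ) = (τ - α)/τ := by field_simp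
      rw [e1, div_mul_eq_mul_div, div_le_iff₀ hτ0]
      have hprod1 := mul_le_mul_of_nonneg_left hp hα0.le
      have hprod2 := mul_nonneg (sub_nonneg.2 hC1) (sub_nonneg.2 hq)
      linarith only [hprod1, hprod2]
  · -- part (b)
    rintro θ ⟨hθm, hθr⟩
    obtain ⟨v, hv⟩ : ∃ v, θ = v * s := ⟨θ / s, (div_mul_cancel₀ θ hs.ne').symm⟩
    have hθ0 : 0 ≤ θ :=
      le_trans (le_min (div_nonneg (mul_nonneg (by linarith) hσ.le) hsq.le) hc₁pos.le) hθm
    have hv0 : 0 ≤ v := by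
      have h0 : (0:ℝ)*s ≤ v*s := by rw [zero_mul, ← hv]; exact hθ0
      exact le_of_mul_le_mul_right h0 hs
    have hvr : v ≤ rL := by
      rw [hv, hrLs] at hθr; exact le_of_mul_le_mul_right hθr hs
    have hvsr : v * s ≤ Real.sqrt lam := by rw [← hv]; exact hθr
    have hGhalf : G v ≤ za/2 := hG_half_le v hv0 hvsr
    have hCRa2 : CRa n σ lam za (v*s) ((rL+za)*s) = 0 :=
      hCRa_zero v (rL + za) hv0 (by linarith [hG_lt v])
    have hCRb2 : CRb n σ α za (v*s) ((rL+za)*s) = 0 := hCRb2_zero v hv0 hvr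
    have hPs1pos := hPs_pos v zt
    have hPs1le : Ps n σ (v*s) (zt*s) ≤ 1 := hPs_le_one v zt hzt0.le
    have hPs0pos := hPs_pos v rL
    rw [hv, hDelta v, hCRa2, hCRb2, add_zero, sub_zero]
    rcases lt_or_ge θ c₁ with hcase | hcase
    · have hν3θ : (za + zt) * σ / Real.sqrt n ≤ θ := by
        rcases le_total ((za + zt) * σ / Real.sqrt n) c₁ with h | h
        · rw [min_eq_left h] at hθm; exact hθm
        · exfalso
          rw [min_eq_right h] at hθm
          linarith
      have hv3 : za + zt ≤ v := by
        rw [hdiv (za+zt), hv] at hν3θ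
        exact le_of_mul_le_mul_right hν3θ hs
      have hvwc : v ≤ wc := by
        rw [hv, hwc] at hcase
        exact ((mul_lt_mul_iff_left₀ hs).1 hcase).le
      have hvG : v + G v ≤ rL := by
        have := hG_mono v wc hv0 hvwc; linarith [hwcG]
      have hCRa0 : CRa n σ lam za (v*s) (rL*s) = 0 := hCRa_zero v rL hv0 hvG
      rw [hCRa0, zero_div, sub_zero, hCRb_last v hv3]
      have h1 : 1 - α ≤ (1 - α)/Ps n σ (v*s) (zt*s) := by
        rw [le_div_iff₀ hPs1pos]
        exact mul_le_of_le_one_right (by linarith only [hα1]) hPs1le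
      linarith [h1, hHle, hα1]
    · have hwcv : wc ≤ v := by
        rw [hv, hwc] at hcase
        exact le_of_mul_le_mul_right hcase hs
      have hvG : rL ≤ v + G v := by
        have := hG_mono wc v hwc0 hwcv; linarith [hwcG]
      have hCRa0 : CRa n σ lam za (v*s) (rL*s) = Phi (G v) - Phi (rL - v) :=
        hCRa_mid v rL (by linarith) (by linarith [hG_nonneg v]) (by linarith [hG_lt v, hzarL])
      have hAnn : Phi (rL - v) ≤ Phi (G v) := Phi_mono (by linarith)
      have hPneg : Phi (-(rL - v)) ≤ 1/2 := by
        have h2 := Phi_mono (show -(rL - v) ≤ 0 by linarith)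
        rw [hPhi0] at h2; exact h2
      have hPnegpos : 0 < Phi (-(rL - v)) := Phi_pos _
      have hPs0ge : Phi (-(rL - v)) ≤ Ps n σ (v*s) (rL*s) := by
        rw [hPsv v rL, show -(rL - v) = v - rL by ring]
        linarith [Phi_nonneg (-v - rL)]
      have hCR1 : CRa n σ lam za (v*s) (rL*s) / Ps n σ (v*s) (rL*s) ≤ 2 * Phi (G v) - 1 := by
        rw [hCRa0]
        have h1 : (Phi (G v) - Phi (rL - v)) / Ps n σ (v*s) (rL*s)
            ≤ (Phi (G v) - Phi (rL - v)) / Phi (-(rL - v)) :=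
          div_le_div_of_nonneg_left (by linarith) hPnegpos hPs0ge
        have h2 : (Phi (G v) - Phi (rL - v)) / Phi (-(rL - v)) ≤ 2 * Phi (G v) - 1 := by
          rw [div_le_iff₀ hPnegpos]
          have h3 := Phi_neg (rL - v)
          have hprod := mul_nonneg (sub_nonneg.2 (Phi_le_one (G v)))
            (show (0:ℝ) ≤ 1 - 2*Phi (-(rL - v)) by linarith only [hPneg])
          linarith only [hprod, h3]
        linarith
      have hGH : Phi (-(za/2)) ≤ Phi (-(G v)) := Phi_mono (by linarith)
      have h1A := Phi_neg (G v)
      rcases lt_or_ge v (za + zt) with hc2 | hc2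
      · have hxlb : za/2 ≤ v - zt := by linarith [hvG, hGhalf, hab_rL]
        have hmidlow : za - zt ≤ v := by linarith [hb2]
        rw [hCRb_mid v hmidlow hc2.le]
        have hx12 : 1/2 ≤ Phi (v - zt) := by
          have h2 := Phi_mono (show (0:ℝ) ≤ v - zt by linarith [hza0])
          rw [hPhi0] at h2; exact h2
        have hCR : Phi (v - zt) - α/2 ≤ (Phi (v - zt) - α/2)/Ps n σ (v*s) (zt*s) := by
          rw [le_div_iff₀ hPs1pos]
          exact mul_le_of_le_one_right (by linarith only [hα1, hx12]) hPs1le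
        have hGx : Phi (-(v - zt)) ≤ Phi (-(G v)) := Phi_mono (by linarith)
        have hpx := Phi_neg (v - zt)
        linarith [hCR, hCR1, hGH, hGx]
      · rw [hCRb_last v hc2]
        have h1 : 1 - α ≤ (1 - α)/Ps n σ (v*s) (zt*s) := by
          rw [le_div_iff₀ hPs1pos]
          exact mul_le_of_le_one_right (by linarith only [hα1]) hPs1le
        linarith [hCR1, hGH, hHha, h1]
  · -- part (c)
    rintro θ hθ
    rw [Set.mem_Ici] at hθ
    obtain ⟨v, hv⟩ : ∃ v, θ = v * s := ⟨θ / s, (div_mul_cancel₀ θ hs.ne').symm⟩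
    have hvsr : Real.sqrt lam ≤ v * s := by rw [← hv]; exact hθ
    have hrv : rL ≤ v := by
      rw [hrLs] at hvsr; exact le_of_mul_le_mul_right hvsr hs
    have hv0 : 0 ≤ v := le_trans hrL0.le hrv
    have hGhalf : za/2 ≤ G v := by
      apply hG_half_ge v
      rw [← hv]; exact hθ
    have hGlt := hG_lt v
    have hG0 := hG_nonneg v
    have hA2 : 1/2 < Phi (G v) := by
      have h2 := Phi_strictMono (show (0:ℝ) < G v by linarith [hza0])
      rw [hPhi0] at h2; exact h2
    have hA1 : Phi (G v) < 1 := Phi_lt_one _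
    have hCRb1 : CRb n σ α za (v*s) (zt*s) = 1 - α := hCRb_last v (by linarith [hab_rL])
    have hPs1pos := hPs_pos v zt
    have hPs1lt : Ps n σ (v*s) (zt*s) < 1 := hPs_lt_one v zt hzt0
    have hPs0pos := hPs_pos v rL
    have hPhiu_pos : 0 < Phi (v - rL) := Phi_pos _
    have hPs0ge : Phi (v - rL) ≤ Ps n σ (v*s) (rL*s) := by
      rw [hPsv v rL]; linarith [Phi_nonneg (-v - rL)]
    rw [hv, hDelta v, hCRb1]
    rcases le_or_gt v (rL + za + G v) with hcase | hcase
    · -- case I/II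
      have hmain : ∀ N D : ℝ, Phi (G v) - α/2 ≤ N → 0 ≤ D →
          D ≤ Phi (G v) - Phi (-(v - rL)) →
          -(α/2) < N / Ps n σ (v*s) (zt*s) - D / Ps n σ (v*s) (rL*s) := by
        intro N D h1 h2 h3
        have hNpos : 0 < N := by linarith [hA2, hα1]
        have hNdiv : N < N / Ps n σ (v*s) (zt*s) := by
          rw [lt_div_iff₀ hPs1pos]
          exact mul_lt_of_lt_one_right hNpos hPs1lt
        have hD1 : D / Ps n σ (v*s) (rL*s) ≤ D / Phi (v - rL) :=
          div_le_div_of_nonneg_left h2 hPhiu_pos hPs0ge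
        have hD2 : D / Phi (v - rL) ≤ Phi (G v) := by
          rw [div_le_iff₀ hPhiu_pos]
          have h4 := Phi_neg (v - rL)
          have hprod := mul_nonneg (sub_nonneg.2 hA1.le) (sub_nonneg.2 (Phi_le_one (v - rL)))
          linarith only [hprod, h4, h3]
        linarith
      rcases le_or_gt v (rL + za - G v) with h1 | h1
      · rw [hCRa_zero v (rL+za) hv0 (by linarith), hCRb2_mid v hrv (by linarith)]
        rcases le_or_gt v (rL + G v) with h2 | h2
        · rw [hCRa_mid v rL (by linarith) h2 (by linarith [hzarL])]
          apply hmain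
          · have h5 : Phi (G v) ≤ Phi (rL + za - v) := Phi_mono (by linarith)
            linarith
          · have h5 : Phi (rL - v) ≤ Phi (G v) := Phi_mono (by linarith)
            linarith
          · rw [show rL - v = -(v - rL) by ring]
        · rw [hCRa_last v rL (by linarith) (by linarith [hzarL])]
          apply hmain
          · have h5 : Phi (G v) ≤ Phi (rL + za - v) := Phi_mono (by linarith)
            linarith
          · have h5 : Phi (-(G v)) ≤ Phi (G v) := Phi_mono (by linarith)
            linarith
          · have h5 : Phi (-(v - rL)) ≤ Phi (-(G v)) := Phi_mono (by linarith)
            linarith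
      · rw [hCRa_mid v (rL+za) (by linarith) (by linarith) (by linarith),
          hCRb2_mid v hrv (by linarith)]
        rcases le_or_gt v (rL + G v) with h2 | h2
        · rw [hCRa_mid v rL (by linarith) h2 (by linarith [hzarL])]
          apply hmain
          · linarith
          · have h5 : Phi (rL - v) ≤ Phi (G v) := Phi_mono (by linarith)
            linarith
          · rw [show rL - v = -(v - rL) by ring]
        · rw [hCRa_last v rL (by linarith) (by linarith [hzarL])]
          apply hmain
          · linarith
          · have h5 : Phi (-(G v)) ≤ Phi (G v) := Phi_mono (by linarith)
            linarith
          · have h5 : Phi (-(v - rL)) ≤ Phi (-(G v)) := Phi_mono (by linarith)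
            linarith
    · -- case III
      have hCRa2v : CRa n σ lam za (v*s) ((rL+za)*s) = Phi (G v) - Phi (-(G v)) :=
        hCRa_last v (rL+za) hcase.le (by linarith)
      have hCRa0v : CRa n σ lam za (v*s) (rL*s) = Phi (G v) - Phi (-(G v)) :=
        hCRa_last v rL (by linarith [hza0]) (by linarith [hzarL])
      have hD0 : 0 ≤ Phi (G v) - Phi (-(G v)) := by
        have h2 := Phi_mono (show -(G v) ≤ G v by linarith)
        linarith
      have hDlt : Phi (G v) - Phi (-(G v)) < Phi (v - rL) := by
        have h1 : Phi (G v) ≤ Phi (v - rL) := Phi_mono (by linarith [hza0])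
        have h2 := Phi_pos (-(G v))
        linarith
      have hratio : (Phi (G v) - Phi (-(G v))) / Phi (v - rL) < 1 :=
        (div_lt_one hPhiu_pos).2 hDlt
      obtain ⟨PM, hCRb2v, hPM1, hPM2⟩ : ∃ PM, CRb n σ α za (v*s) ((rL+za)*s) = 1 - α/2 - PM ∧
          Phi (-(v - rL)) ≤ PM ∧ α/2 ≤ PM := by
        rcases le_or_gt v (rL + 2*za) with h3 | h3
        · refine ⟨Phi (rL + za - v), hCRb2_mid v hrv h3, Phi_mono (by linarith), ?_⟩
          have h4 := Phi_mono (show -za ≤ rL + za - v by linarith)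
          rw [hza] at h4; exact h4
        · refine ⟨Phi (-za), ?_, Phi_mono (by linarith), by rw [hza]⟩
          rw [hCRb2_last v h3.le, hza]; ring
      rw [hCRa2v, hCRa0v, hCRb2v]
      have hD1 : (Phi (G v) - Phi (-(G v))) / Ps n σ (v*s) (rL*s)
          ≤ (Phi (G v) - Phi (-(G v))) / Phi (v - rL) :=
        div_le_div_of_nonneg_left hD0 hPhiu_pos hPs0ge
      have hkey : (Phi (G v) - Phi (-(G v))) / Phi (v - rL)
          - (Phi (G v) - Phi (-(G v))) < PM := by
        have e : (Phi (G v) - Phi (-(G v)))/Phi (v - rL) - (Phi (G v) - Phi (-(G v)))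
            = ((Phi (G v) - Phi (-(G v)))/Phi (v - rL)) * (1 - Phi (v - rL)) := by
          field_simp
        have h4 := Phi_neg (v - rL)
        have h5 : ((Phi (G v) - Phi (-(G v)))/Phi (v - rL)) * Phi (-(v - rL))
            < 1 * Phi (-(v - rL)) :=
          mul_lt_mul_of_pos_right hratio (Phi_pos _)
        rw [e, ← h4]
        linarith [h5, hPM1]
      have h6 : Phi (-(G v)) < 1/2 := by
        have h7 := Phi_strictMono (show -(G v) < 0 by linarith [hza0])
        rw [hPhi0] at h7; exact h7
      have hN : 0 < 1 - α + (Phi (G v) - Phi (-(G v))) - (1 - α/2 - PM) := by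
        linarith
      have hNdiv : (1 - α + (Phi (G v) - Phi (-(G v))) - (1 - α/2 - PM))
          ≤ (1 - α + (Phi (G v) - Phi (-(G v))) - (1 - α/2 - PM)) / Ps n σ (v*s) (zt*s) := by
        rw [le_div_iff₀ hPs1pos]
        exact mul_le_of_le_one_right hN.le hPs1lt.le
      linarith [hD1, hkey, hNdiv]
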